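/- Let r be a positive integer, 𝕂 a field containing a primitive r-th root of unity z, and G a chordal simple graph on vertex set {1,…,ℓ} with perfect elimination ordering (v_1,…,v_ℓ). Then for every integer t, χ(M(G,r), t) = ∏_{k=1}^{ℓ} (t − r·|E_{<k}| − 1). -/

import Mathlib

open Finset
open scoped Classical

/-- The characteristic polynomial of a finite set of (hyper)planes, evaluated at an
integer `t`:  `χ(A,t) = Σ_{I ⊆ A} (−1)^{|I|} t^{dim ∩_{H ∈ I} H}`, the empty
intersection being the whole space. -/
noncomputable def chi {K V : Type} [Field K] [Fintype V]
    (A : Finset (Submodule K (V → K))) (t : ℤ) : ℤ :=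
  ∑ I ∈ A.powerset, (-1) ^ I.card * t ^ (Module.finrank K ↥(I.inf id))
/-- The graphic monomial arrangement `M(G,r)`: the hyperplanes `{x_i − z^k x_j = 0}`
for every edge `{i,j}` of `G` and `1 ≤ k ≤ r`, together with the coordinate
hyperplanes `{x_i = 0}`. -/
noncomputable def monArr (K : Type) [Field K] (z : K) (r : ℕ) {V : Type} [Fintype V]
    (G : SimpleGraph V) : Finset (Submodule K (V → K)) :=
  (Finset.univ.image fun i : V =>
      LinearMap.ker (LinearMap.proj i : (V → K) →ₗ[K] K)) ∪
  (((Finset.univ : Finset (V × V)).filter (fun p => G.Adj p.1 p.2)).biUnion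
    (fun p => (Finset.range r).image fun k =>
      LinearMap.ker
        ((LinearMap.proj p.1 : (V → K) →ₗ[K] K) - z ^ (k + 1) • LinearMap.proj p.2)))

section Lattice
variable {L : Type*} [SemilatticeInf L] [OrderTop L] [DecidableEq L]

lemma sum_powerset_inf_cancel (w : L → ℤ) (M : Finset L) (b : L) (hb : b ∈ M) :
    ∑ T ∈ M.powerset, (-1 : ℤ) ^ T.card * w (b ⊓ T.inf id) = 0 := by
  have hb' : b ∉ M.erase b := Finset.notMem_erase _ _
  rw [← Finset.insert_erase hb, Finset.sum_powerset_insert hb']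
  rw [← Finset.sum_add_distrib]
  apply Finset.sum_eq_zero
  intro T hT
  have hbT : b ∉ T := fun h => hb' (Finset.mem_powerset.1 hT h)
  rw [Finset.card_insert_of_notMem hbT, Finset.inf_insert]
  have : b ⊓ (id b ⊓ T.inf id) = b ⊓ T.inf id := by
    simp [← inf_assoc]
  rw [this, pow_succ]
  ring

lemma inf_finset_inf (H : L) (J : Finset L) :
    H ⊓ (J.inf fun X => H ⊓ X) = H ⊓ J.inf id := by
  induction J using Finset.induction_on with
  | empty => simp
  | insert _ _ ha IH =>
      rename_i a s
      rw [Finset.inf_insert, Finset.inf_insert]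
      calc H ⊓ ((H ⊓ a) ⊓ s.inf fun X => H ⊓ X)
          = a ⊓ (H ⊓ s.inf fun X => H ⊓ X) := by
            rw [← inf_assoc, ← inf_assoc, inf_idem, inf_assoc, inf_left_comm]
        _ = a ⊓ (H ⊓ s.inf id) := by rw [IH]
        _ = H ⊓ (id a ⊓ s.inf id) := inf_left_comm a H _

lemma collapse {α : Type*} [DecidableEq α] (f : α → L) (S : Finset α) :
    ∀ w : L → ℤ,
      ∑ J ∈ S.powerset, (-1 : ℤ) ^ J.card * w ((J.image f).inf id)
        = ∑ T ∈ (S.image f).powerset, (-1 : ℤ) ^ T.card * w (T.inf id) := by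
  induction S using Finset.induction_on with
  | empty => intro w; simp
  | insert _ _ ha IH =>
      rename_i a s
      intro w
      rw [Finset.sum_powerset_insert ha]
      have step : ∀ J ∈ s.powerset, (-1 : ℤ) ^ (insert a J).card * w (((insert a J).image f).inf id)
          = -((-1 : ℤ) ^ J.card * w (f a ⊓ (J.image f).inf id)) := by
        intro J hJ
        have haJ : a ∉ J := fun h => ha (Finset.mem_powerset.1 hJ h)
        rw [Finset.card_insert_of_notMem haJ, Finset.image_insert, Finset.inf_insert, pow_succ,
          id_eq]
        ring
      rw [Finset.sum_congr rfl step, ← Finset.sum_add_distrib]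
      have lhs_eq : ∑ J ∈ s.powerset,
          ((-1 : ℤ) ^ J.card * w ((J.image f).inf id)
            + -((-1 : ℤ) ^ J.card * w (f a ⊓ (J.image f).inf id)))
          = (∑ T ∈ (s.image f).powerset, (-1 : ℤ) ^ T.card * w (T.inf id))
            - ∑ T ∈ (s.image f).powerset, (-1 : ℤ) ^ T.card * w (f a ⊓ T.inf id) := by
        rw [Finset.sum_add_distrib, Finset.sum_neg_distrib, IH w, IH (fun X => w (f a ⊓ X))]
        ring
      rw [lhs_eq, Finset.image_insert]
      by_cases hfa : f a ∈ s.image f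
      · rw [Finset.insert_eq_self.2 hfa, sum_powerset_inf_cancel w _ _ hfa, sub_zero]
      · rw [Finset.sum_powerset_insert hfa]
        have step2 : ∀ T ∈ (s.image f).powerset,
            (-1 : ℤ) ^ (insert (f a) T).card * w ((insert (f a) T).inf id)
            = -((-1 : ℤ) ^ T.card * w (f a ⊓ T.inf id)) := by
          intro T hT
          have h2 : f a ∉ T := fun h => hfa (Finset.mem_powerset.1 hT h)
          rw [Finset.card_insert_of_notMem h2, Finset.inf_insert, pow_succ, id_eq]
          ring
        rw [Finset.sum_congr rfl step2, Finset.sum_neg_distrib]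
        ring

end Lattice

section ChiN
variable {K M : Type*} [Field K] [AddCommGroup M] [Module K M] [FiniteDimensional K M]

noncomputable def chiN (t : ℤ) (c : ℕ) (S : Finset (Submodule K M)) : ℤ :=
  ∑ J ∈ S.powerset, (-1 : ℤ) ^ J.card * t ^ (Module.finrank K ↥(J.inf id) - c)

noncomputable def chiNX (t : ℤ) (c : ℕ) (H : Submodule K M) (S : Finset (Submodule K M)) : ℤ :=
  ∑ J ∈ S.powerset, (-1 : ℤ) ^ J.card * t ^ (Module.finrank K ↥(H ⊓ J.inf id) - c)

lemma chiN_insert (t : ℤ) (c : ℕ) {H : Submodule K M} {S : Finset (Submodule K M)} (hH : H ∉ S) :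
    chiN t c (insert H S) = chiN t c S - chiNX t c H S := by
  unfold chiN chiNX
  rw [Finset.sum_powerset_insert hH]
  have step : ∀ J ∈ S.powerset, (-1 : ℤ) ^ (insert H J).card
        * t ^ (Module.finrank K ↥((insert H J).inf id) - c)
      = -((-1 : ℤ) ^ J.card * t ^ (Module.finrank K ↥(H ⊓ J.inf id) - c)) := by
    intro J hJ
    have hHJ : H ∉ J := fun h => hH (Finset.mem_powerset.1 hJ h)
    rw [Finset.card_insert_of_notMem hHJ, Finset.inf_insert, pow_succ, id_eq]
    ring
  rw [Finset.sum_congr rfl step, Finset.sum_neg_distrib]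
  ring

lemma chiNX_eq_image (t : ℤ) (c : ℕ) (H : Submodule K M) (B : Finset (Submodule K M)) :
    chiNX t c H B = ∑ T ∈ (B.image fun X => H ⊓ X).powerset,
      (-1 : ℤ) ^ T.card * t ^ (Module.finrank K ↥(H ⊓ T.inf id) - c) := by
  unfold chiNX
  rw [← collapse (fun X => H ⊓ X) B (fun X => t ^ (Module.finrank K ↥(H ⊓ X) - c))]
  apply Finset.sum_congr rfl
  intro J hJ
  have : H ⊓ (J.image fun X => H ⊓ X).inf id = H ⊓ J.inf id := by
    rw [Finset.inf_image]
    exact inf_finset_inf H J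
  rw [this]

lemma chiNX_congr (t : ℤ) (c : ℕ) (H : Submodule K M) {S A : Finset (Submodule K M)}
    (h : (S.image fun X => H ⊓ X) = A.image fun X => H ⊓ X) :
    chiNX t c H S = chiNX t c H A := by
  rw [chiNX_eq_image, chiNX_eq_image, h]

lemma finrank_inf_ker {X : Submodule K M} (f : M →ₗ[K] K) (u : M) (hu : u ∈ X)
    (hfu : f u ≠ 0) :
    Module.finrank K ↥(LinearMap.ker f ⊓ X) + 1 = Module.finrank K ↥X := by
  have hsup : LinearMap.ker f ⊔ X = ⊤ := by
    rw [eq_top_iff]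
    intro w _
    have h1 : w - (f w / f u) • u ∈ LinearMap.ker f := by
      simp [LinearMap.mem_ker, div_mul_cancel₀, hfu]
    have h2 : (f w / f u) • u ∈ X := X.smul_mem _ hu
    have : w = (w - (f w / f u) • u) + (f w / f u) • u := by abel
    rw [this]
    exact Submodule.add_mem_sup h1 h2
  have hrange : LinearMap.range f = ⊤ := by
    rw [LinearMap.range_eq_top]
    intro cc
    exact ⟨(cc / f u) • u, by simp [div_mul_cancel₀, hfu]⟩
  have hker : Module.finrank K ↥(LinearMap.ker f) + 1 = Module.finrank K M := by
    have := LinearMap.finrank_range_add_finrank_ker f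
    rw [hrange, finrank_top] at this
    rw [Module.finrank_self] at this
    omega
  have h3 := Submodule.finrank_sup_add_finrank_inf_eq (LinearMap.ker f) X
  rw [hsup, finrank_top] at h3
  omega

lemma block_lemma (t : ℤ) (c : ℕ) (A : Finset (Submodule K M)) (val : ℤ)
    (B : Finset (Submodule K M))
    (hdisj : ∀ H ∈ B, H ∉ A)
    (hmod : ∀ H ∈ B, ∀ H' ∈ B, H' ≠ H → ∃ X ∈ A, H ⊓ H' = H ⊓ X)
    (hval : ∀ H ∈ B, chiNX t c H A = val) :
    chiN t c (A ∪ B) = chiN t c A - B.card * val := by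
  revert hdisj hmod hval
  induction B using Finset.induction_on with
  | empty => intro _ _ _; simp
  | insert _ _ ha IH =>
      rename_i H B
      intro hdisj hmod hval
      have hHB : H ∉ A ∪ B := by
        simp only [Finset.mem_union, not_or]
        exact ⟨hdisj H (Finset.mem_insert_self _ _), ha⟩
      rw [Finset.union_insert, chiN_insert t c hHB]
      have himg : ((A ∪ B).image fun X => H ⊓ X) = A.image fun X => H ⊓ X := by
        apply Finset.Subset.antisymm
        · intro Y hY
          rcases Finset.mem_image.1 hY with ⟨H', hH', rfl⟩
          rcases Finset.mem_union.1 hH' with h | h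
          · exact Finset.mem_image_of_mem _ h
          · obtain ⟨X, hX, hXeq⟩ := hmod H (Finset.mem_insert_self _ _) H'
              (Finset.mem_insert_of_mem h) (fun he => ha (he ▸ h))
            rw [hXeq]
            exact Finset.mem_image_of_mem _ hX
        · exact Finset.image_subset_image Finset.subset_union_left
      rw [chiNX_congr t c H himg, hval H (Finset.mem_insert_self _ _)]
      rw [IH (fun H' h => hdisj H' (Finset.mem_insert_of_mem h))
            (fun H1 h1 H2 h2 hne => hmod H1 (Finset.mem_insert_of_mem h1) H2
              (Finset.mem_insert_of_mem h2) hne)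
            (fun H' h => hval H' (Finset.mem_insert_of_mem h))]
      rw [Finset.card_insert_of_notMem ha]
      push_cast
      ring

end ChiN

section Arr
variable {ℓ : ℕ} {K : Type} [Field K]

noncomputable def pr (i : Fin ℓ) : (Fin ℓ → K) →ₗ[K] K := LinearMap.proj i
noncomputable def cH (K : Type) [Field K] (i : Fin ℓ) : Submodule K (Fin ℓ → K) :=
  LinearMap.ker (pr i)
noncomputable def eH (z : K) (a b : Fin ℓ) (k : ℕ) : Submodule K (Fin ℓ → K) :=
  LinearMap.ker (pr a - z ^ (k + 1) • pr b)

lemma mem_cH {i : Fin ℓ} {x : Fin ℓ → K} : x ∈ cH K i ↔ x i = 0 := by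
  simp [cH, pr, LinearMap.mem_ker]

lemma mem_eH {z : K} {a b : Fin ℓ} {k : ℕ} {x : Fin ℓ → K} :
    x ∈ eH z a b k ↔ x a = z ^ (k + 1) * x b := by
  simp [eH, pr, LinearMap.mem_ker, sub_eq_zero]

variable {r : ℕ} {z : K}

lemma zpow_ne (hr : 0 < r) (hz : IsPrimitiveRoot z r) (k : ℕ) : z ^ (k + 1) ≠ 0 :=
  pow_ne_zero _ (hz.ne_zero hr.ne')

lemma zpow_eq_iff_le (hr : 0 < r) (hz : IsPrimitiveRoot z r) {i j : ℕ} (hij : i ≤ j) :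
    z ^ i = z ^ j ↔ i ≡ j [MOD r] := by
  have hzne : z ≠ 0 := hz.ne_zero hr.ne'
  have h1 : z ^ j = z ^ i * z ^ (j - i) := by rw [← pow_add]; congr 1; omega
  rw [h1, eq_comm, mul_right_eq_self₀, hz.pow_eq_one_iff_dvd,
    or_iff_left (pow_ne_zero _ hzne), ← Nat.modEq_iff_dvd' hij]

lemma zpow_eq_iff (hr : 0 < r) (hz : IsPrimitiveRoot z r) {i j : ℕ} :
    z ^ i = z ^ j ↔ i ≡ j [MOD r] := by
  rcases le_total i j with hij | hij
  · exact zpow_eq_iff_le hr hz hij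
  · rw [eq_comm, zpow_eq_iff_le hr hz hij]
    exact ⟨Nat.ModEq.symm, Nat.ModEq.symm⟩

lemma pow_succ_inj (hr : 0 < r) (hz : IsPrimitiveRoot z r) {k k' : ℕ} (hk : k < r) (hk' : k' < r)
    (h : z ^ (k + 1) = z ^ (k' + 1)) : k = k' := by
  have h3 : (k + 1) % r = (k' + 1) % r := (zpow_eq_iff hr hz).1 h
  by_cases e1 : k + 1 = r
  · by_cases e2 : k' + 1 = r
    · omega
    · rw [e1, Nat.mod_self, Nat.mod_eq_of_lt (by omega)] at h3; omega
  · by_cases e2 : k' + 1 = r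
    · rw [e2, Nat.mod_self, Nat.mod_eq_of_lt (by omega)] at h3; omega
    · rw [Nat.mod_eq_of_lt (by omega), Nat.mod_eq_of_lt (by omega)] at h3; omega

lemma exists_pow (hr : 0 < r) (hz : IsPrimitiveRoot z r) (m : ℕ) :
    ∃ k < r, z ^ (k + 1) = z ^ m := by
  refine ⟨(m + r - 1) % r, Nat.mod_lt _ hr, ?_⟩
  rw [zpow_eq_iff hr hz]
  calc (m + r - 1) % r + 1 ≡ (m + r - 1) + 1 [MOD r] :=
        Nat.ModEq.add_right 1 (Nat.mod_modEq _ r)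
    _ = m + r := by omega
    _ ≡ m [MOD r] := by
        have : (m + r) % r = m % r := Nat.add_mod_right m r
        exact this
  
lemma exists_conj (hr : 0 < r) (hz : IsPrimitiveRoot z r) (k : ℕ) :
    ∃ k' < r, z ^ (k + 1) * z ^ (k' + 1) = 1 := by
  obtain ⟨k', hk', h⟩ := exists_pow hr hz ((r - 1) * (k + 1))
  refine ⟨k', hk', ?_⟩
  rw [h, ← pow_add]
  have he : k + 1 + (r - 1) * (k + 1) = r * (k + 1) := by
    cases r with
    | zero => omega
    | succ s => simp only [Nat.succ_sub_one]; ring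
  rw [he, pow_mul, hz.pow_eq_one, one_pow]

lemma exists_div (hr : 0 < r) (hz : IsPrimitiveRoot z r) (k k' : ℕ) :
    ∃ k'' < r, z ^ (k'' + 1) * z ^ (k' + 1) = z ^ (k + 1) := by
  obtain ⟨k'', hk'', h⟩ := exists_pow hr hz (k + 1 + (r - 1) * (k' + 1))
  refine ⟨k'', hk'', ?_⟩
  rw [h, ← pow_add]
  have he : k + 1 + (r - 1) * (k' + 1) + (k' + 1) = (k + 1) + r * (k' + 1) := by
    cases r with
    | zero => omega
    | succ s => simp only [Nat.succ_sub_one]; ring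
  rw [he, pow_add, pow_mul, hz.pow_eq_one, one_pow, mul_one]

lemma eH_symm {a b : Fin ℓ} {k k' : ℕ} (hz : z ≠ 0)
    (h : z ^ (k + 1) * z ^ (k' + 1) = 1) : eH z a b k = eH z b a k' := by
  unfold eH
  have hc : pr (K := K) b - z ^ (k' + 1) • pr a
      = (-(z ^ (k' + 1))) • (pr a - z ^ (k + 1) • pr b) := by
    refine LinearMap.ext fun x => ?_
    show x b - z ^ (k' + 1) * x a = -z ^ (k' + 1) * (x a - z ^ (k + 1) * x b)
    linear_combination (-(x b)) * h
  rw [hc, LinearMap.ker_smul _ _ (neg_ne_zero.2 (pow_ne_zero _ hz))]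

end Arr

section Arr2
variable {ℓ : ℕ} {K : Type} [Field K] {r : ℕ} {z : K} {G : SimpleGraph (Fin ℓ)}

noncomputable def arr (z : K) (r : ℕ) (G : SimpleGraph (Fin ℓ)) (S : Finset (Fin ℓ)) :
    Finset (Submodule K (Fin ℓ → K)) :=
  (S.image fun i => cH K i) ∪
  ((Finset.univ.filter fun p : Fin ℓ × Fin ℓ => G.Adj p.1 p.2 ∧ p.1 ∈ S ∧ p.2 ∈ S).biUnion
    fun p => (Finset.range r).image fun k => eH z p.1 p.2 k)

lemma mem_arr {S : Finset (Fin ℓ)} {X : Submodule K (Fin ℓ → K)} :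
    X ∈ arr z r G S ↔ (∃ i ∈ S, X = cH K i) ∨
      ∃ a b : Fin ℓ, ∃ k : ℕ, G.Adj a b ∧ a ∈ S ∧ b ∈ S ∧ k < r ∧ X = eH z a b k := by
  simp only [arr, Finset.mem_union, Finset.mem_image, Finset.mem_biUnion, Finset.mem_filter,
    Finset.mem_univ, true_and, Finset.mem_range, Prod.exists]
  constructor
  · rintro (⟨i, hi, rfl⟩ | ⟨a, b, ⟨hab, ha, hb⟩, k, hk, rfl⟩)
    · exact Or.inl ⟨i, hi, rfl⟩
    · exact Or.inr ⟨a, b, k, hab, ha, hb, hk, rfl⟩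
  · rintro (⟨i, hi, rfl⟩ | ⟨a, b, k, hab, ha, hb, hk, rfl⟩)
    · exact Or.inl ⟨i, hi, rfl⟩
    · exact Or.inr ⟨a, b, ⟨hab, ha, hb⟩, k, hk, rfl⟩

noncomputable def Blk (z : K) (r : ℕ) (G : SimpleGraph (Fin ℓ)) (S : Finset (Fin ℓ))
    (m : Fin ℓ) : Finset (Submodule K (Fin ℓ → K)) :=
  insert (cH K m) ((S.filter fun a => G.Adj a m).biUnion
    fun a => (Finset.range r).image fun k => eH z a m k)

lemma mem_Blk {S : Finset (Fin ℓ)} {m : Fin ℓ} {X : Submodule K (Fin ℓ → K)} :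
    X ∈ Blk z r G S m ↔ X = cH K m ∨
      ∃ a : Fin ℓ, ∃ k : ℕ, a ∈ S ∧ G.Adj a m ∧ k < r ∧ X = eH z a m k := by
  simp only [Blk, Finset.mem_insert, Finset.mem_biUnion, Finset.mem_filter, Finset.mem_image,
    Finset.mem_range]
  constructor
  · rintro (rfl | ⟨a, ⟨ha, hadj⟩, k, hk, rfl⟩)
    · exact Or.inl rfl
    · exact Or.inr ⟨a, k, ha, hadj, hk, rfl⟩
  · rintro (rfl | ⟨a, k, ha, hadj, hk, rfl⟩)
    · exact Or.inl rfl
    · exact Or.inr ⟨a, ⟨ha, hadj⟩, k, hk, rfl⟩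

/-- witness vector -/
noncomputable def w2 (a m : Fin ℓ) (c : K) : Fin ℓ → K := Pi.single a c + Pi.single m 1

lemma w2_a {a m : Fin ℓ} (h : a ≠ m) (c : K) : w2 a m c a = c := by
  simp [w2, Pi.single_apply, h, h.symm]

lemma w2_m {a m : Fin ℓ} (h : a ≠ m) (c : K) : w2 a m c m = c * 0 + 1 := by
  simp [w2, Pi.single_apply, h, h.symm]

lemma w2_other {a m j : Fin ℓ} (h1 : j ≠ a) (h2 : j ≠ m) (c : K) : w2 a m c j = 0 := by
  simp [w2, Pi.single_apply, h1, h2]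

lemma single_mem_cH {i j : Fin ℓ} (h : i ≠ j) : Pi.single i (1 : K) ∈ cH K j := by
  simp [mem_cH, Pi.single_apply, h.symm]

lemma single_not_mem_cH {i : Fin ℓ} : Pi.single i (1 : K) ∉ cH K i := by
  simp [mem_cH]

lemma single_mem_eH {i a b : Fin ℓ} {k : ℕ} (ha : a ≠ i) (hb : b ≠ i) :
    Pi.single i (1 : K) ∈ eH z a b k := by
  simp [mem_eH, Pi.single_apply, ha, hb]

lemma w2_mem_eH {a m : Fin ℓ} (h : a ≠ m) (k : ℕ) : w2 a m (z ^ (k + 1)) ∈ eH z a m k := by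
  rw [mem_eH, w2_a h, w2_m h]
  ring

end Arr2

section Arr3
variable {ℓ : ℕ} {K : Type} [Field K] {r : ℕ} {z : K} {G : SimpleGraph (Fin ℓ)}

lemma ne_of_mem_not_mem {X Y : Submodule K (Fin ℓ → K)} {x : Fin ℓ → K}
    (h1 : x ∈ X) (h2 : x ∉ Y) : X ≠ Y := fun h => h2 (h ▸ h1)

variable (hr : 0 < r) (hz : IsPrimitiveRoot z r)
include hr hz

-- block-internal distinctness
lemma eH_ne_same {a m : Fin ℓ} (h : a ≠ m) {k k' : ℕ} (hk : k < r) (hk' : k' < r)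
    (hkk : k ≠ k') : eH z a m k ≠ eH z a m k' := by
  apply ne_of_mem_not_mem (w2_mem_eH h k)
  rw [mem_eH, w2_a h, w2_m h]
  intro hcon
  apply hkk
  exact pow_succ_inj hr hz hk hk' (by rw [hcon]; ring)

lemma eH_ne_diff {a a' m : Fin ℓ} (h : a ≠ m) (h' : a' ≠ m) (haa : a ≠ a') (k k' : ℕ) :
    eH z a m k ≠ eH z a' m k' := by
  apply ne_of_mem_not_mem (w2_mem_eH h k)
  rw [mem_eH, w2_other haa.symm h', w2_m h]
  intro hcon
  exact zpow_ne hr hz k' (by linear_combination -hcon)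

lemma cH_ne_eH {a m : Fin ℓ} (h : a ≠ m) (k : ℕ) : cH K m ≠ eH z a m k := by
  intro hcon
  have h1 : Pi.single a (1:K) ∈ cH K m := single_mem_cH h
  rw [hcon, mem_eH] at h1
  rw [Pi.single_eq_same, Pi.single_eq_of_ne h.symm] at h1
  exact one_ne_zero (by rw [h1]; ring)

-- block vs arr S distinctness
lemma cHm_ne_cH {i m : Fin ℓ} (h : i ≠ m) : cH K m ≠ cH K i := by
  apply Ne.symm
  apply ne_of_mem_not_mem (x := Pi.single m (1:K)) (single_mem_cH h.symm)
  exact single_not_mem_cH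

lemma cHm_ne_eH' {a b m : Fin ℓ} (ha : a ≠ m) (hb : b ≠ m) (k : ℕ) :
    cH K m ≠ eH z a b k := by
  apply Ne.symm
  apply ne_of_mem_not_mem (x := Pi.single m (1:K)) (single_mem_eH ha hb)
  exact single_not_mem_cH

lemma eH_ne_cH {a m i : Fin ℓ} (ham : a ≠ m) (k : ℕ) :
    eH z a m k ≠ cH K i := by
  by_cases hia : i = a
  · subst hia
    apply ne_of_mem_not_mem (w2_mem_eH ham k)
    rw [mem_cH, w2_a ham]
    exact zpow_ne hr hz k
  · by_cases him : i = m
    · subst him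
      exact (cH_ne_eH hr hz ham k).symm
    · exact ne_of_mem_not_mem
        (single_mem_eH (fun h => hia h.symm) (fun h => him h.symm)) single_not_mem_cH

lemma eH_ne_eH {a m a' b' : Fin ℓ} (ham : a ≠ m) (ha' : a' ≠ m) (hb' : b' ≠ m)
    (hab' : a' ≠ b') (k k' : ℕ) : eH z a m k ≠ eH z a' b' k' := by
  by_cases haa : a' = a
  · subst haa
    apply ne_of_mem_not_mem (w2_mem_eH ham k)
    rw [mem_eH, w2_a ham, w2_other (Ne.symm hab') hb']
    intro h1
    exact zpow_ne hr hz k (by rw [h1]; ring)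
  · have h1 : Pi.single a' (1:K) ∈ eH z a m k :=
      single_mem_eH (Ne.symm haa) (Ne.symm ha')
    have h2 : Pi.single a' (1:K) ∉ eH z a' b' k' := by
      rw [mem_eH, Pi.single_eq_same, Pi.single_eq_of_ne (Ne.symm hab')]
      simp
    exact ne_of_mem_not_mem h1 h2

end Arr3

section Arr4
variable {ℓ : ℕ} {K : Type} [Field K] {r : ℕ} {z : K}

lemma mod_cHm_eH {a m : Fin ℓ} (k : ℕ) :
    cH K m ⊓ eH z a m k = cH K m ⊓ cH K a := by
  ext x
  simp only [Submodule.mem_inf, mem_cH, mem_eH]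
  constructor
  · rintro ⟨h1, h2⟩
    exact ⟨h1, by rw [h2, h1, mul_zero]⟩
  · rintro ⟨h1, h2⟩
    exact ⟨h1, by rw [h2, h1, mul_zero]⟩

lemma mod_eH_cHm {a m : Fin ℓ} {k : ℕ} (hc : z ^ (k + 1) ≠ 0) :
    eH z a m k ⊓ cH K m = eH z a m k ⊓ cH K a := by
  ext x
  simp only [Submodule.mem_inf, mem_cH, mem_eH]
  constructor
  · rintro ⟨h1, h2⟩
    exact ⟨h1, by rw [h1, h2, mul_zero]⟩
  · rintro ⟨h1, h2⟩
    refine ⟨h1, ?_⟩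
    rcases mul_eq_zero.1 (show z ^ (k + 1) * x m = 0 by rw [← h1, h2]) with h | h
    · exact absurd h hc
    · exact h

lemma mod_eH_eH_same {a m : Fin ℓ} {k k' : ℕ} (hc : z ^ (k + 1) ≠ 0)
    (hne : z ^ (k + 1) ≠ z ^ (k' + 1)) :
    eH z a m k ⊓ eH z a m k' = eH z a m k ⊓ cH K a := by
  ext x
  simp only [Submodule.mem_inf, mem_cH, mem_eH]
  constructor
  · rintro ⟨h1, h2⟩
    refine ⟨h1, ?_⟩
    have hx : (z ^ (k + 1) - z ^ (k' + 1)) * x m = 0 := by linear_combination h2 - h1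
    rcases mul_eq_zero.1 hx with h | h
    · exact absurd (sub_eq_zero.1 h) hne
    · rw [h1, h, mul_zero]
  · rintro ⟨h1, h2⟩
    refine ⟨h1, ?_⟩
    rcases mul_eq_zero.1 (show z ^ (k + 1) * x m = 0 by rw [← h1, h2]) with h | h
    · exact absurd h hc
    · rw [h, mul_zero]
      exact h2

lemma mod_eH_eH_diff {a a' m : Fin ℓ} {k k' k'' : ℕ}
    (hc'' : z ^ (k'' + 1) ≠ 0) (hd : z ^ (k'' + 1) * z ^ (k' + 1) = z ^ (k + 1)) :
    eH z a m k ⊓ eH z a' m k' = eH z a m k ⊓ eH z a a' k'' := by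
  ext x
  simp only [Submodule.mem_inf, mem_eH]
  constructor
  · rintro ⟨h1, h2⟩
    exact ⟨h1, by linear_combination h1 - z ^ (k'' + 1) * h2 - x m * hd⟩
  · rintro ⟨h1, h2⟩
    refine ⟨h1, ?_⟩
    have : z ^ (k'' + 1) * x a' = z ^ (k'' + 1) * (z ^ (k' + 1) * x m) := by
      linear_combination -h2 + h1 - x m * hd
    exact mul_left_cancel₀ hc'' this

end Arr4

section Arr5
variable {ℓ : ℕ} {K : Type} [Field K] {r : ℕ} {z : K} {G : SimpleGraph (Fin ℓ)}

lemma single_mem_arr {S : Finset (Fin ℓ)} {i : Fin ℓ} (hi : i ∉ S)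
    {X : Submodule K (Fin ℓ → K)} (hX : X ∈ arr z r G S) : Pi.single i (1 : K) ∈ X := by
  rcases mem_arr.1 hX with ⟨j, hj, rfl⟩ | ⟨a, b, k, _, ha, hb, _, rfl⟩
  · exact single_mem_cH (fun h => hi (by rw [h]; exact hj))
  · exact single_mem_eH (fun h => hi (by rw [← h]; exact ha)) (fun h => hi (by rw [← h]; exact hb))

lemma rank_lower {S : Finset (Fin ℓ)} {J : Finset (Submodule K (Fin ℓ → K))}
    (hJ : J ⊆ arr z r G S) : ℓ - S.card ≤ Module.finrank K ↥(J.inf id) := by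
  classical
  set T : Finset (Fin ℓ) := Sᶜ with hT
  have hli : LinearIndependent K (fun i : {x // x ∈ T} => (Pi.single (i : Fin ℓ) 1 : Fin ℓ → K)) := by
    have h0 : (fun i : Fin ℓ => Pi.single i (1:K)) = ⇑(Pi.basisFun K (Fin ℓ)) := by
      funext i; rw [Pi.basisFun_apply]
    have hb := (Pi.basisFun K (Fin ℓ)).linearIndependent
    rw [← h0] at hb
    exact hb.comp _ Subtype.val_injective
  have hspan := finrank_span_eq_card (R := K) hli
  have hle : Submodule.span K
      (Set.range fun i : {x // x ∈ T} => (Pi.single (i : Fin ℓ) 1 : Fin ℓ → K)) ≤ J.inf id := by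
    rw [Submodule.span_le]
    rintro x ⟨i, rfl⟩
    have him : (i : Fin ℓ) ∉ S := Finset.mem_compl.1 i.2
    exact Submodule.mem_finsetInf.2 fun X hX => single_mem_arr him (hJ hX)
  calc ℓ - S.card = T.card := by rw [hT, Finset.card_compl, Fintype.card_fin]
    _ = Fintype.card {x // x ∈ T} := (Fintype.card_coe T).symm
    _ = Module.finrank K ↥(Submodule.span K
          (Set.range fun i : {x // x ∈ T} => (Pi.single (i : Fin ℓ) 1 : Fin ℓ → K))) := hspan.symm
    _ ≤ _ := Submodule.finrank_mono hle

lemma rank_drop (hr : 0 < r) (hz : IsPrimitiveRoot z r) {S : Finset (Fin ℓ)} {m : Fin ℓ}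
    (hm : m ∉ S) {H : Submodule K (Fin ℓ → K)} (hH : H ∈ Blk z r G S m)
    {J : Finset (Submodule K (Fin ℓ → K))} (hJ : J ⊆ arr z r G S) :
    Module.finrank K ↥(H ⊓ J.inf id) + 1 = Module.finrank K ↥(J.inf id) := by
  have hu : Pi.single m (1:K) ∈ J.inf id :=
    Submodule.mem_finsetInf.2 fun X hX => single_mem_arr hm (hJ hX)
  rcases mem_Blk.1 hH with rfl | ⟨a, k, ha, hadj, hk, rfl⟩
  · have hcH : cH K m = LinearMap.ker (pr (K := K) m) := rfl
    rw [hcH]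
    refine finrank_inf_ker _ _ hu ?_
    show (Pi.single m 1 : Fin ℓ → K) m ≠ 0
    rw [Pi.single_eq_same]
    exact one_ne_zero
  · have ham : a ≠ m := hadj.ne
    have heH : eH z a m k = LinearMap.ker (pr (K := K) a - z ^ (k+1) • pr m) := rfl
    rw [heH]
    refine finrank_inf_ker _ _ hu ?_
    show (Pi.single m 1 : Fin ℓ → K) a - z ^ (k+1) * (Pi.single m 1 : Fin ℓ → K) m ≠ 0
    rw [Pi.single_eq_same, Pi.single_eq_of_ne ham, mul_one, zero_sub]
    exact neg_ne_zero.2 (zpow_ne hr hz k)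

lemma card_Blk (hr : 0 < r) (hz : IsPrimitiveRoot z r) {S : Finset (Fin ℓ)} {m : Fin ℓ}
    (hm : m ∉ S) :
    (Blk z r G S m).card = r * (S.filter fun a => G.Adj a m).card + 1 := by
  unfold Blk
  rw [Finset.card_insert_of_notMem, Finset.card_biUnion]
  · have hcard : ∀ a ∈ S.filter (fun a => G.Adj a m),
        ((Finset.range r).image fun k => eH z a m k).card = r := by
      intro a hafil
      have ham : a ≠ m := ((Finset.mem_filter.1 hafil).2).ne
      rw [Finset.card_image_of_injOn, Finset.card_range]
      intro k hk k' hk' hkk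
      by_contra hne
      exact eH_ne_same hr hz ham (Finset.mem_range.1 hk) (Finset.mem_range.1 hk') hne hkk
    rw [Finset.sum_congr rfl hcard, Finset.sum_const, smul_eq_mul, mul_comm]
  · intro a hafil a' hafil' haa
    have ham : a ≠ m := ((Finset.mem_filter.1 hafil).2).ne
    have ham' : a' ≠ m := ((Finset.mem_filter.1 hafil').2).ne
    rw [Function.onFun, Finset.disjoint_left]
    rintro X hX hX'
    rcases Finset.mem_image.1 hX with ⟨k, _, rfl⟩
    rcases Finset.mem_image.1 hX' with ⟨k', _, hEq⟩
    exact eH_ne_diff hr hz ham' ham (Ne.symm haa) k' k hEq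
  · rw [Finset.mem_biUnion]
    rintro ⟨a, hafil, hmem⟩
    rcases Finset.mem_image.1 hmem with ⟨k, _, hEq⟩
    exact cH_ne_eH hr hz ((Finset.mem_filter.1 hafil).2).ne k hEq.symm

lemma Blk_disjoint (hr : 0 < r) (hz : IsPrimitiveRoot z r) {S : Finset (Fin ℓ)} {m : Fin ℓ}
    (hm : m ∉ S) : ∀ H ∈ Blk z r G S m, H ∉ arr z r G S := by
  intro H hH hHa
  have hnm : ∀ i ∈ S, i ≠ m := fun i hi h => hm (h ▸ hi)
  rcases mem_Blk.1 hH with rfl | ⟨a, k, ha, hadj, hk, rfl⟩ <;>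
    rcases mem_arr.1 hHa with ⟨i, hi, hEq⟩ | ⟨a', b', k', hadj', ha', hb', hk', hEq⟩
  · exact cHm_ne_cH hr hz (hnm i hi) hEq
  · exact cHm_ne_eH' hr hz (hnm a' ha') (hnm b' hb') k' hEq
  · exact eH_ne_cH hr hz hadj.ne k hEq
  · exact eH_ne_eH hr hz hadj.ne (hnm a' ha') (hnm b' hb') hadj'.ne k k' hEq

lemma Blk_mod (hr : 0 < r) (hz : IsPrimitiveRoot z r) {S : Finset (Fin ℓ)} {m : Fin ℓ}
    (hm : m ∉ S)
    (hclique : ∀ a ∈ S, ∀ a' ∈ S, G.Adj a m → G.Adj a' m → a ≠ a' → G.Adj a a') :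
    ∀ H ∈ Blk z r G S m, ∀ H' ∈ Blk z r G S m, H' ≠ H →
      ∃ X ∈ arr z r G S, H ⊓ H' = H ⊓ X := by
  intro H hH H' hH' hne
  rcases mem_Blk.1 hH with rfl | ⟨a, k, ha, hadj, hk, rfl⟩
  · rcases mem_Blk.1 hH' with rfl | ⟨a', k', ha', hadj', hk', rfl⟩
    · exact absurd rfl hne
    · exact ⟨cH K a', mem_arr.2 (Or.inl ⟨a', ha', rfl⟩), mod_cHm_eH k'⟩
  · rcases mem_Blk.1 hH' with rfl | ⟨a', k', ha', hadj', hk', rfl⟩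
    · exact ⟨cH K a, mem_arr.2 (Or.inl ⟨a, ha, rfl⟩), mod_eH_cHm (zpow_ne hr hz k)⟩
    · by_cases haa : a = a'
      · subst haa
        have hkk : z ^ (k + 1) ≠ z ^ (k' + 1) := by
          intro h
          exact hne (by rw [pow_succ_inj hr hz hk hk' h])
        exact ⟨cH K a, mem_arr.2 (Or.inl ⟨a, ha, rfl⟩),
          mod_eH_eH_same (zpow_ne hr hz k) hkk⟩
      · obtain ⟨k'', hk'', hd⟩ := exists_div hr hz k k'
        exact ⟨eH z a a' k'',
          mem_arr.2 (Or.inr ⟨a, a', k'', hclique a ha a' ha' hadj hadj' haa, ha, ha', hk'', rfl⟩),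
          mod_eH_eH_diff (zpow_ne hr hz k'') hd⟩

end Arr5

section Arr6
variable {ℓ : ℕ} {K : Type} [Field K] {r : ℕ} {z : K} {G : SimpleGraph (Fin ℓ)}

lemma arr_insert (hr : 0 < r) (hz : IsPrimitiveRoot z r) {S : Finset (Fin ℓ)} {m : Fin ℓ} :
    arr z r G (insert m S) = arr z r G S ∪ Blk z r G S m := by
  ext X
  rw [Finset.mem_union, mem_arr, mem_arr, mem_Blk]
  constructor
  · rintro (⟨i, hi, rfl⟩ | ⟨a, b, k, hadj, ha, hb, hk, rfl⟩)
    · rcases Finset.mem_insert.1 hi with rfl | hi'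
      · exact Or.inr (Or.inl rfl)
      · exact Or.inl (Or.inl ⟨i, hi', rfl⟩)
    · rcases Finset.mem_insert.1 ha with rfl | ha' <;> rcases Finset.mem_insert.1 hb with h2 | hb'
      · exact absurd h2.symm hadj.ne
      · obtain ⟨k', hk', hkk⟩ := exists_conj hr hz k
        exact Or.inr (Or.inr ⟨b, k', hb', hadj.symm,
          hk', eH_symm (hz.ne_zero hr.ne') hkk⟩)
      · exact Or.inr (Or.inr ⟨a, k, ha', h2 ▸ hadj, hk, by rw [h2]⟩)
      · exact Or.inl (Or.inr ⟨a, b, k, hadj, ha', hb', hk, rfl⟩)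
  · rintro ((⟨i, hi, rfl⟩ | ⟨a, b, k, hadj, ha, hb, hk, rfl⟩) | (rfl | ⟨a, k, ha, hadj, hk, rfl⟩))
    · exact Or.inl ⟨i, Finset.mem_insert_of_mem hi, rfl⟩
    · exact Or.inr ⟨a, b, k, hadj, Finset.mem_insert_of_mem ha,
        Finset.mem_insert_of_mem hb, hk, rfl⟩
    · exact Or.inl ⟨m, Finset.mem_insert_self m S, rfl⟩
    · exact Or.inr ⟨a, m, k, hadj, Finset.mem_insert_of_mem ha,
        Finset.mem_insert_self m S, hk, rfl⟩

lemma card_lt_of_not_mem {S : Finset (Fin ℓ)} {m : Fin ℓ} (hm : m ∉ S) : S.card < ℓ := by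
  have h1 : S ≠ Finset.univ := fun h => hm (h ▸ Finset.mem_univ m)
  have := Finset.card_lt_card (Finset.ssubset_univ_iff.2 h1)
  simpa using this

lemma chiNX_blk (hr : 0 < r) (hz : IsPrimitiveRoot z r) {S : Finset (Fin ℓ)} {m : Fin ℓ}
    (hm : m ∉ S) {H : Submodule K (Fin ℓ → K)} (hH : H ∈ Blk z r G S m) (t : ℤ) :
    chiNX t (ℓ - S.card - 1) H (arr z r G S) = chiN t (ℓ - S.card) (arr z r G S) := by
  unfold chiN chiNX
  apply Finset.sum_congr rfl
  intro J hJ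
  have h1 := rank_drop hr hz hm hH (Finset.mem_powerset.1 hJ)
  have h2 := rank_lower (Finset.mem_powerset.1 hJ)
  have h3 : S.card < ℓ := card_lt_of_not_mem hm
  have he : Module.finrank K ↥(H ⊓ J.inf id) - (ℓ - S.card - 1)
      = Module.finrank K ↥(J.inf id) - (ℓ - S.card) := by omega
  rw [he]

lemma chiN_shift {S : Finset (Fin ℓ)} {m : Fin ℓ} (hm : m ∉ S) (t : ℤ) :
    chiN t (ℓ - S.card - 1) (arr z r G S) = t * chiN t (ℓ - S.card) (arr z r G S) := by
  unfold chiN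
  rw [Finset.mul_sum]
  apply Finset.sum_congr rfl
  intro J hJ
  have h2 := rank_lower (Finset.mem_powerset.1 hJ)
  have h3 : S.card < ℓ := card_lt_of_not_mem hm
  have he : Module.finrank K ↥(J.inf id) - (ℓ - S.card - 1)
      = (Module.finrank K ↥(J.inf id) - (ℓ - S.card)) + 1 := by omega
  rw [he, pow_succ]
  ring

lemma step_lemma (hr : 0 < r) (hz : IsPrimitiveRoot z r) {S : Finset (Fin ℓ)} {m : Fin ℓ}
    (hm : m ∉ S)
    (hclique : ∀ a ∈ S, ∀ a' ∈ S, G.Adj a m → G.Adj a' m → a ≠ a' → G.Adj a a') (t : ℤ) :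
    chiN t (ℓ - S.card - 1) (arr z r G (insert m S))
      = (t - r * (S.filter fun a => G.Adj a m).card - 1)
        * chiN t (ℓ - S.card) (arr z r G S) := by
  rw [arr_insert hr hz,
    block_lemma t (ℓ - S.card - 1) (arr z r G S) (chiN t (ℓ - S.card) (arr z r G S))
      (Blk z r G S m) (Blk_disjoint hr hz hm) (Blk_mod hr hz hm hclique)
      (fun H hH => chiNX_blk hr hz hm hH t),
    chiN_shift hm t, card_Blk hr hz hm]
  push_cast
  ring

end Arr6

section Master
variable {ℓ : ℕ} {K : Type} [Field K] {r : ℕ} {z : K} {G : SimpleGraph (Fin ℓ)}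

noncomputable def Sv (v : Equiv.Perm (Fin ℓ)) (n : ℕ) : Finset (Fin ℓ) :=
  Finset.univ.filter fun i => ((v.symm i : Fin ℓ) : ℕ) < n

lemma filter_val_lt_card {n : ℕ} (hn : n ≤ ℓ) :
    (Finset.univ.filter fun j : Fin ℓ => (j : ℕ) < n).card = n := by
  have himg : (Finset.univ.filter fun j : Fin ℓ => (j : ℕ) < n)
      = Finset.univ.image (Fin.castLE hn) := by
    ext j
    simp only [Finset.mem_filter, Finset.mem_univ, true_and, Finset.mem_image]
    constructor
    · intro h
      exact ⟨⟨(j : ℕ), h⟩, Fin.ext rfl⟩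
    · rintro ⟨x, _, rfl⟩
      exact x.isLt
  rw [himg, Finset.card_image_of_injective _ (Fin.castLE_injective hn), Finset.card_univ,
    Fintype.card_fin]

lemma Sv_card (v : Equiv.Perm (Fin ℓ)) {n : ℕ} (hn : n ≤ ℓ) : (Sv v n).card = n := by
  have himg : Sv v n = (Finset.univ.filter fun j : Fin ℓ => (j : ℕ) < n).image v := by
    ext i
    simp only [Sv, Finset.mem_filter, Finset.mem_univ, true_and, Finset.mem_image]
    constructor
    · intro h
      exact ⟨v.symm i, h, v.apply_symm_apply i⟩
    · rintro ⟨j, hj, rfl⟩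
      rwa [v.symm_apply_apply]
  rw [himg, Finset.card_image_of_injective _ v.injective, filter_val_lt_card hn]

lemma Sv_succ (v : Equiv.Perm (Fin ℓ)) {n : ℕ} (hn : n < ℓ) :
    Sv v (n + 1) = insert (v ⟨n, hn⟩) (Sv v n) := by
  ext i
  simp only [Sv, Finset.mem_filter, Finset.mem_univ, true_and, Finset.mem_insert]
  constructor
  · intro h
    rcases Nat.lt_succ_iff_lt_or_eq.1 h with h' | h'
    · exact Or.inr h'
    · left
      have he : v.symm i = ⟨n, hn⟩ := Fin.ext h'
      rw [← he, v.apply_symm_apply]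
  · rintro (rfl | h')
    · rw [v.symm_apply_apply]
      exact Nat.lt_succ_self n
    · exact Nat.lt_succ_of_lt h'

lemma mnotin (v : Equiv.Perm (Fin ℓ)) {n : ℕ} (hn : n < ℓ) : v ⟨n, hn⟩ ∉ Sv v n := by
  simp [Sv, v.symm_apply_apply]

lemma nbr_count (v : Equiv.Perm (Fin ℓ)) {n : ℕ} (hn : n < ℓ) :
    ((Sv v n).filter fun a => G.Adj a (v ⟨n, hn⟩)).card
      = (Finset.univ.filter fun j : Fin ℓ =>
          j < ⟨n, hn⟩ ∧ G.Adj (v j) (v ⟨n, hn⟩)).card := by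
  have himg : (Sv v n).filter (fun a => G.Adj a (v ⟨n, hn⟩))
      = (Finset.univ.filter fun j : Fin ℓ =>
          j < ⟨n, hn⟩ ∧ G.Adj (v j) (v ⟨n, hn⟩)).image v := by
    ext a
    simp only [Sv, Finset.mem_filter, Finset.mem_univ, true_and, Finset.mem_image,
      Finset.filter_filter]
    constructor
    · rintro ⟨h1, h2⟩
      refine ⟨v.symm a, ⟨?_, ?_⟩, v.apply_symm_apply a⟩
      · exact h1
      · rw [v.apply_symm_apply]; exact h2
    · rintro ⟨j, ⟨hj1, hj2⟩, rfl⟩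
      rw [v.symm_apply_apply]
      exact ⟨hj1, hj2⟩
  rw [himg, Finset.card_image_of_injective _ v.injective]

lemma master (hr : 0 < r) (hz : IsPrimitiveRoot z r) (v : Equiv.Perm (Fin ℓ))
    (hPEO : ∀ k j l : Fin ℓ, j < k → l < k → j ≠ l →
      G.Adj (v j) (v k) → G.Adj (v l) (v k) → G.Adj (v j) (v l))
    (t : ℤ) :
    ∀ n, n ≤ ℓ → chiN t (ℓ - n) (arr z r G (Sv v n))
      = ∏ k ∈ Finset.univ.filter (fun k : Fin ℓ => (k : ℕ) < n),
          (t - (r : ℤ) * ((Finset.univ.filter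
              fun j : Fin ℓ => j < k ∧ G.Adj (v j) (v k)).card : ℤ) - 1) := by
  intro n
  induction n with
  | zero =>
    intro _
    have hS : Sv v 0 = ∅ := by simp [Sv]
    have hA : arr z r G (∅ : Finset (Fin ℓ)) = (∅ : Finset (Submodule K (Fin ℓ → K))) := by
      ext X
      simp [mem_arr]
    have hfilter : (Finset.univ.filter fun k : Fin ℓ => (k : ℕ) < 0) = ∅ := by simp
    rw [hS, hA, hfilter, Finset.prod_empty]
    unfold chiN
    rw [Finset.powerset_empty, Finset.sum_singleton, Finset.card_empty, Finset.inf_empty,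
      pow_zero, one_mul]
    have htop : Module.finrank K ↥(⊤ : Submodule K (Fin ℓ → K)) = ℓ := by
      rw [finrank_top, Module.finrank_fintype_fun_eq_card, Fintype.card_fin]
    rw [htop, Nat.sub_zero, Nat.sub_self, pow_zero]
  | succ n IH =>
    intro hn1
    have hn : n < ℓ := hn1
    have hm : v ⟨n, hn⟩ ∉ Sv v n := mnotin v hn
    have hcard : (Sv v n).card = n := Sv_card v hn.le
    have hclique : ∀ a ∈ Sv v n, ∀ a' ∈ Sv v n,
        G.Adj a (v ⟨n, hn⟩) → G.Adj a' (v ⟨n, hn⟩) → a ≠ a' → G.Adj a a' := by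
      intro a ha a' ha' h1 h2 hne
      have hj : ((v.symm a : Fin ℓ) : ℕ) < n := (Finset.mem_filter.1 ha).2
      have hj' : ((v.symm a' : Fin ℓ) : ℕ) < n := (Finset.mem_filter.1 ha').2
      have hres := hPEO ⟨n, hn⟩ (v.symm a) (v.symm a') hj hj'
        (fun h => hne (by rw [← v.apply_symm_apply a, ← v.apply_symm_apply a', h]))
        (by rw [v.apply_symm_apply]; exact h1)
        (by rw [v.apply_symm_apply]; exact h2)
      rwa [v.apply_symm_apply, v.apply_symm_apply] at hres
    have e1 : ℓ - (n + 1) = ℓ - (Sv v n).card - 1 := by omega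
    rw [Sv_succ v hn, e1, step_lemma hr hz hm hclique t, hcard, IH hn.le, nbr_count v hn]
    have hfil : (Finset.univ.filter fun k : Fin ℓ => (k : ℕ) < n + 1)
        = insert ⟨n, hn⟩ (Finset.univ.filter fun k : Fin ℓ => (k : ℕ) < n) := by
      ext k
      simp only [Finset.mem_filter, Finset.mem_univ, true_and, Finset.mem_insert, Fin.ext_iff]
      omega
    rw [hfil, Finset.prod_insert (by simp)]

end Master

section Final
variable {ℓ : ℕ} {K : Type} [Field K] {r : ℕ} {z : K} {G : SimpleGraph (Fin ℓ)}

lemma Sv_univ (v : Equiv.Perm (Fin ℓ)) : Sv v ℓ = Finset.univ := by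
  ext i
  simp [Sv, Fin.is_lt]

lemma monArr_eq_arr : (monArr K z r G : Finset (Submodule K (Fin ℓ → K)))
    = arr z r G Finset.univ := by
  ext X
  rw [mem_arr]
  simp only [monArr, Finset.mem_union, Finset.mem_image, Finset.mem_biUnion, Finset.mem_filter,
    Finset.mem_univ, true_and, Finset.mem_range, Prod.exists]
  constructor
  · rintro (⟨i, rfl⟩ | ⟨a, b, hadj, k, hk, rfl⟩)
    · exact Or.inl ⟨i, rfl⟩
    · exact Or.inr ⟨a, b, k, hadj, hk, rfl⟩
  · rintro (⟨i, rfl⟩ | ⟨a, b, k, hadj, hk, rfl⟩)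
    · exact Or.inl ⟨i, rfl⟩
    · exact Or.inr ⟨a, b, hadj, k, hk, rfl⟩

end Final


/-- Let `G` be a chordal graph on `{1,…,ℓ}` with a perfect
elimination ordering `(v_1,…,v_ℓ)` and let `z ∈ 𝕂` be a primitive `r`-th root of
unity.  Then `χ(M(G,r), t) = ∏_{k=1}^{ℓ} (t − r·|E_{<k}| − 1)`, where
`E_{<k} = {j < k : {v_j,v_k} ∈ E}`. -/
theorem stmt13 (ℓ : ℕ) (K : Type) [Field K] (r : ℕ) (hr : 0 < r)
    (z : K) (hz : IsPrimitiveRoot z r)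
    (G : SimpleGraph (Fin ℓ)) (v : Equiv.Perm (Fin ℓ))
    (hPEO : ∀ k j l : Fin ℓ, j < k → l < k → j ≠ l →
      G.Adj (v j) (v k) → G.Adj (v l) (v k) → G.Adj (v j) (v l))
    (t : ℤ) :
    chi (monArr K z r G) t
      = ∏ k : Fin ℓ,
          (t - (r : ℤ) * ((Finset.univ.filter
              fun j : Fin ℓ => j < k ∧ G.Adj (v j) (v k)).card : ℤ) - 1) := by
  have hM := master hr hz v hPEO t ℓ le_rfl
  have hSu : Sv v ℓ = Finset.univ := Sv_univ v
  have hfl : (Finset.univ.filter fun k : Fin ℓ => (k : ℕ) < ℓ) = Finset.univ := by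
    ext k
    simp [k.isLt]
  rw [hSu, hfl, Nat.sub_self] at hM
  have hchi : chi (monArr K z r G) t = chiN t 0 (arr z r G Finset.univ) := by
    rw [monArr_eq_arr]
    unfold chi chiN
    apply Finset.sum_congr rfl
    intro J hJ
    rw [Nat.sub_zero]
  rw [hchi, hM]
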